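/- Let A be a C*-algebra, X a Hilbert A-module, and I₁, I₂ closed ideals of A. The restriction of the quotient map [·]_{I₂/(I₁∩I₂)} : X_{I₁∩I₂} → X_{I₂} to the submodule X_{I₁∩I₂}·(I₁/(I₁∩I₂)) is a bijection onto X_{I₂}·((I₁+I₂)/I₂). -/

import Mathlib

noncomputable section

/-- A (right) Hilbert C*-module over a C*-algebra `A`. -/
class HilbertModule (A : Type*) [CStarAlgebra A] (X : Type*)
    [NormedAddCommGroup X] [NormedSpace ℂ X] : Type _ where
  rsmul : X → A → X
  inner : X → X → A
  rsmul_add_left : ∀ (x y : X) (a : A), rsmul (x + y) a = rsmul x a + rsmul y a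
  rsmul_add_right : ∀ (x : X) (a b : A), rsmul x (a + b) = rsmul x a + rsmul x b
  rsmul_rsmul : ∀ (x : X) (a b : A), rsmul (rsmul x a) b = rsmul x (a * b)
  rsmul_csmul_left : ∀ (c : ℂ) (x : X) (a : A), rsmul (c • x) a = c • rsmul x a
  rsmul_csmul_right : ∀ (c : ℂ) (x : X) (a : A), rsmul x (c • a) = c • rsmul x a
  inner_add_left : ∀ (x y z : X), inner (x + y) z = inner x z + inner y z
  inner_add_right : ∀ (x y z : X), inner x (y + z) = inner x y + inner x z
  inner_csmul_right : ∀ (c : ℂ) (x y : X), inner x (c • y) = c • inner x y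
  star_inner : ∀ (x y : X), star (inner x y) = inner y x
  inner_rsmul_right : ∀ (x y : X) (a : A), inner x (rsmul y a) = inner x y * a
  inner_self_isPositive : ∀ x : X, ∃ b : A, inner x x = star b * b
  norm_sq_inner : ∀ x : X, ‖x‖ ^ 2 = ‖inner x x‖
  norm_inner_le : ∀ x y : X, ‖inner x y‖ ≤ ‖x‖ * ‖y‖
  norm_rsmul_le : ∀ (x : X) (a : A), ‖rsmul x a‖ ≤ ‖x‖ * ‖a‖

namespace HilbertModule

variable {A : Type*} [CStarAlgebra A] {X : Type*}
  [NormedAddCommGroup X] [NormedSpace ℂ X] [HilbertModule A X]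

/-- The closed submodule `X·S` generated by products `ξ·a`, `a ∈ S`. -/
def idealSub (X : Type*) {A : Type*} [CStarAlgebra A] [NormedAddCommGroup X]
    [NormedSpace ℂ X] [HilbertModule A X] (S : Set A) : Set X :=
  closure (Submodule.span ℂ {x : X | ∃ (ξ : X) (a : A), a ∈ S ∧ x = rsmul ξ a} : Set X)

/-- The rank-one ("theta") operator `ζ ↦ ξ⟨η,ζ⟩`. -/
def rankOne (A : Type*) {X : Type*} [CStarAlgebra A] [NormedAddCommGroup X]
    [NormedSpace ℂ X] [HilbertModule A X] (ξ η : X) : X →L[ℂ] X :=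
  LinearMap.mkContinuous
    { toFun := fun ζ => rsmul ξ (inner (A := A) η ζ)
      map_add' := fun x y => by
        show rsmul ξ (inner (A := A) η (x + y)) = _
        rw [inner_add_right, rsmul_add_right]
      map_smul' := fun c x => by
        show rsmul ξ (inner (A := A) η (c • x)) = _
        simp only [RingHom.id_apply]
        rw [inner_csmul_right, rsmul_csmul_right] }
    (‖ξ‖ * ‖η‖)
    (fun ζ => by
      calc ‖rsmul ξ (inner (A := A) η ζ)‖ ≤ ‖ξ‖ * ‖inner (A := A) η ζ‖ :=
            norm_rsmul_le _ _
        _ ≤ ‖ξ‖ * (‖η‖ * ‖ζ‖) :=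
            mul_le_mul_of_nonneg_left (norm_inner_le _ _) (norm_nonneg _)
        _ = ‖ξ‖ * ‖η‖ * ‖ζ‖ := (mul_assoc _ _ _).symm)

/-- The set of "compact" operators `K(X)`: the closed linear span of rank-one operators. -/
def compacts (A X : Type*) [CStarAlgebra A] [NormedAddCommGroup X]
    [NormedSpace ℂ X] [HilbertModule A X] : Set (X →L[ℂ] X) :=
  closure (Submodule.span ℂ {T : X →L[ℂ] X | ∃ ξ η : X, T = rankOne A ξ η} : Set (X →L[ℂ] X))

/-- `K(X·I)`, viewed inside the operators on `X`: the closed span of rank-one operators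
with both legs in the subset `S`. -/
def compactsOn (A : Type*) {X : Type*} [CStarAlgebra A] [NormedAddCommGroup X]
    [NormedSpace ℂ X] [HilbertModule A X] (S : Set X) : Set (X →L[ℂ] X) :=
  closure (Submodule.span ℂ
    {T : X →L[ℂ] X | ∃ ξ ∈ S, ∃ η ∈ S, T = rankOne A ξ η} : Set (X →L[ℂ] X))

/-- An operator is adjointable if it has an adjoint with respect to the `A`-valued
inner product. -/
def IsAdjointable (A : Type*) {X : Type*} [CStarAlgebra A] [NormedAddCommGroup X]
    [NormedSpace ℂ X] [HilbertModule A X] (S : X →L[ℂ] X) : Prop :=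
  ∃ T : X →L[ℂ] X, ∀ x y : X, inner (A := A) (S x) y = inner (A := A) x (T y)

end HilbertModule

/-- A C*-correspondence over `A`: a Hilbert `A`-module with a left action of `A`
by adjointable operators. -/
class Correspondence (A : Type*) [CStarAlgebra A] (X : Type*)
    [NormedAddCommGroup X] [NormedSpace ℂ X] extends HilbertModule A X where
  lsmul : A → X → X
  lsmul_add_left : ∀ (a b : A) (x : X), lsmul (a + b) x = lsmul a x + lsmul b x
  lsmul_add_right : ∀ (a : A) (x y : X), lsmul a (x + y) = lsmul a x + lsmul a y
  lsmul_mul : ∀ (a b : A) (x : X), lsmul (a * b) x = lsmul a (lsmul b x)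
  lsmul_csmul_left : ∀ (c : ℂ) (a : A) (x : X), lsmul (c • a) x = c • lsmul a x
  lsmul_csmul_right : ∀ (c : ℂ) (a : A) (x : X), lsmul a (c • x) = c • lsmul a x
  inner_lsmul_left : ∀ (a : A) (x y : X), inner (lsmul a x) y = inner x (lsmul (star a) y)
  lsmul_rsmul : ∀ (a : A) (x : X) (b : A), lsmul a (rsmul x b) = rsmul (lsmul a x) b
  norm_lsmul_le : ∀ (a : A) (x : X), ‖lsmul a x‖ ≤ ‖a‖ * ‖x‖

namespace Correspondence

open HilbertModule

variable {A : Type*} [CStarAlgebra A] {X : Type*}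
  [NormedAddCommGroup X] [NormedSpace ℂ X] [Correspondence A X]

/-- The left action `φ_X(a)` as a continuous linear operator on `X`. -/
def lact (A : Type*) {X : Type*} [CStarAlgebra A] [NormedAddCommGroup X]
    [NormedSpace ℂ X] [Correspondence A X] (a : A) : X →L[ℂ] X :=
  LinearMap.mkContinuous
    { toFun := lsmul a
      map_add' := lsmul_add_right a
      map_smul' := fun c x => by
        show lsmul a (c • x) = _
        simp only [RingHom.id_apply]; rw [lsmul_csmul_right] }
    ‖a‖ (norm_lsmul_le a)

/-- The ideal `X(S)`: closed span of `{⟨η, φ_X(a)ξ⟩ : a ∈ S}`. -/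
def corrApply (X : Type*) {A : Type*} [CStarAlgebra A] [NormedAddCommGroup X]
    [NormedSpace ℂ X] [Correspondence A X] (S : Set A) : Set A :=
  closure (Submodule.span ℂ
    {b : A | ∃ a ∈ S, ∃ ξ η : X, b = inner (A := A) η (lsmul a ξ)} : Set A)

/-- The ideal `X⁻¹(S) = {a : ⟨η, φ_X(a)ξ⟩ ∈ S for all ξ, η}`. -/
def corrInv (X : Type*) {A : Type*} [CStarAlgebra A] [NormedAddCommGroup X]
    [NormedSpace ℂ X] [Correspondence A X] (S : Set A) : Set A :=
  {a : A | ∀ ξ η : X, inner (A := A) η (lsmul a ξ) ∈ S}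

/-- The kernel of the left action `φ_X`. -/
def kerLact (X : Type*) {A : Type*} [CStarAlgebra A] [NormedAddCommGroup X]
    [NormedSpace ℂ X] [Correspondence A X] : Set A :=
  {a : A | ∀ ξ : X, lsmul a ξ = 0}

/-- Katsura's ideal `J_X = φ_X⁻¹(K(X)) ∩ (ker φ_X)^⊥`. -/
def JX (X : Type*) {A : Type*} [CStarAlgebra A] [NormedAddCommGroup X]
    [NormedSpace ℂ X] [Correspondence A X] : Set A :=
  {a : A | lact A (X := X) a ∈ compacts A X ∧ ∀ b ∈ kerLact X, a * b = 0}

end Correspondence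

open HilbertModule Correspondence

/-- Data presenting a Hilbert `B`-module `Y` as the quotient `X_I = X/XI` of a Hilbert
`A`-module `X` by a closed two-sided ideal `I` of `A` (with `B` playing the role of `A/I`). -/
structure QuotientData (A B : Type*) [CStarAlgebra A] [CStarAlgebra B]
    (I : TwoSidedIdeal A)
    (X Y : Type*) [NormedAddCommGroup X] [NormedSpace ℂ X] [HilbertModule A X]
    [NormedAddCommGroup Y] [NormedSpace ℂ Y] [HilbertModule B Y] : Type _ where
  π : A →⋆ₐ[ℂ] B
  π_surjective : Function.Surjective π
  π_ker : ∀ a : A, π a = 0 ↔ a ∈ I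
  q : X →ₗ[ℂ] Y
  q_surjective : Function.Surjective q
  q_ker : ∀ ξ : X, q ξ = 0 ↔ ξ ∈ idealSub X (I : Set A)
  q_inner : ∀ ξ ζ : X, inner (A := B) (q ξ) (q ζ) = π (inner (A := A) ξ ζ)
  q_rsmul : ∀ (ξ : X) (a : A), q (rsmul ξ a) = rsmul (q ξ) (π a)


/-- Quotient data compatible with the left actions (presenting `X_I` as a
C*-correspondence over `A/I`). -/
structure CorrQuotientData (A B : Type*) [CStarAlgebra A] [CStarAlgebra B]
    (I : TwoSidedIdeal A)
    (X Y : Type*) [NormedAddCommGroup X] [NormedSpace ℂ X] [Correspondence A X]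
    [NormedAddCommGroup Y] [NormedSpace ℂ Y] [Correspondence B Y]
    extends QuotientData A B I X Y where
  q_lsmul : ∀ (a : A) (ξ : X), q (lsmul a ξ) = lsmul (π a) (q ξ)

/-- Katsura's ideal `J(I) = {a : [φ_X(a)]_I ∈ K(X_I), a·X⁻¹(I) ⊂ I}`, expressed via
quotient data presenting `X_I`. -/
def JofI {A B : Type*} [CStarAlgebra A] [CStarAlgebra B] {I : TwoSidedIdeal A}
    {X Y : Type*} [NormedAddCommGroup X] [NormedSpace ℂ X] [Correspondence A X]
    [NormedAddCommGroup Y] [NormedSpace ℂ Y] [HilbertModule B Y]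
    (D : QuotientData A B I X Y) : Set A :=
  {a : A | (∃ T ∈ compacts B Y, ∀ ξ : X, T (D.q ξ) = D.q (lsmul a ξ)) ∧
    ∀ b ∈ corrInv X (I : Set A), a * b ∈ I}

/-- A Hilbert `A`-bimodule: a C*-correspondence together with a left inner product
satisfying `φ_X(⟪ξ,η⟫) = θ_{ξ,η}`. -/
class HilbertBimodule (A : Type*) [CStarAlgebra A] (X : Type*)
    [NormedAddCommGroup X] [NormedSpace ℂ X] extends Correspondence A X where
  linner : X → X → A
  lsmul_linner : ∀ ξ η ζ : X, lsmul (linner ξ η) ζ = rsmul ξ (inner η ζ)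

/-- The closed subspace `φ_X(S)X`: closed span of `{φ_X(a)ξ : a ∈ S}`. -/
def lsmulSet (X : Type*) {A : Type*} [CStarAlgebra A] [NormedAddCommGroup X]
    [NormedSpace ℂ X] [Correspondence A X] (S : Set A) : Set X :=
  closure (Submodule.span ℂ
    {x : X | ∃ a ∈ S, ∃ ξ : X, x = Correspondence.lsmul a ξ} : Set X)

section AuxSpec

open scoped ENNReal

lemma auxSpec_norm_le {C B : Type*} [CStarAlgebra C] [CStarAlgebra B] (φ : C →ₐ[ℂ] B)
    {x : C} (hx : IsSelfAdjoint x) (hφx : IsSelfAdjoint (φ x)) : ‖φ x‖ ≤ ‖x‖ := by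
  have h1 : spectralRadius ℂ (φ x) ≤ spectralRadius ℂ x := by
    simp only [spectralRadius]
    refine iSup₂_le fun k hk => ?_
    exact le_iSup₂ (f := fun (k : ℂ) (_ : k ∈ spectrum ℂ x) => (‖k‖₊ : ℝ≥0∞)) k
      (AlgHom.spectrum_apply_subset φ x hk)
  rw [hx.spectralRadius_eq_nnnorm, hφx.spectralRadius_eq_nnnorm] at h1
  exact_mod_cast h1

lemma auxSpec_norm_ge {C B : Type*} [CStarAlgebra C] [CStarAlgebra B] (φ : C →ₐ[ℂ] B)
    (hsurj : Function.Surjective φ) {x : C} (hx : IsSelfAdjoint x)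
    (hann : ∀ k : C, φ k = 0 → x * k = 0 ∧ k * x = 0) : ‖x‖ ≤ ‖φ x‖ := by
  rcases eq_or_ne x 0 with rfl | hx0
  · simp
  rcases subsingleton_or_nontrivial B with hB | hB
  · exfalso
    have h0 : φ x = 0 := Subsingleton.elim _ _
    have hxx : x * x = 0 := (hann x h0).1
    have hn : ‖x‖ * ‖x‖ = 0 := by
      rw [← CStarRing.norm_star_mul_self, hx.star_eq, hxx, norm_zero]
    exact hx0 (norm_eq_zero.mp (by nlinarith [norm_nonneg x]))
  haveI : Nontrivial C := nontrivial_of_ne x 0 hx0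
  obtain ⟨lam, hlam, hlamnorm⟩ := spectrum.exists_nnnorm_eq_spectralRadius (a := x)
  rw [hx.spectralRadius_eq_nnnorm] at hlamnorm
  have hnx : ‖lam‖ = ‖x‖ := by
    have h' : ‖lam‖₊ = ‖x‖₊ := by exact_mod_cast hlamnorm
    rw [← coe_nnnorm lam, ← coe_nnnorm x, h']
  have hlam0 : lam ≠ 0 := by
    intro h
    rw [h, norm_zero] at hnx
    exact hx0 (norm_eq_zero.mp hnx.symm)
  have hmem : lam ∈ spectrum ℂ (φ x) := by
    by_contra hcon
    rw [spectrum.notMem_iff] at hcon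
    obtain ⟨v, hv⟩ := hcon
    obtain ⟨u, hu⟩ := hsurj (↑v⁻¹)
    set y := algebraMap ℂ C lam - x with hy
    have hφy : φ y = ↑v := by rw [hy, map_sub, AlgHom.commutes, hv]
    have hcomm : x * y = y * x := by
      rw [hy, mul_sub, sub_mul, Algebra.commutes]
    have hk1 : φ (u * y - 1) = 0 := by
      rw [map_sub, map_mul, hu, hφy, map_one, Units.inv_mul, sub_self]
    have hk2 : φ (y * u - 1) = 0 := by
      rw [map_sub, map_mul, hu, hφy, map_one, Units.mul_inv, sub_self]
    have huyx : u * y * x = x := by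
      have h1 : (u * y - 1) * x = 0 := (hann _ hk1).2
      rw [sub_mul, one_mul, sub_eq_zero] at h1
      exact h1
    have hxyu : x * (y * u) = x := by
      have h2 : x * (y * u - 1) = 0 := (hann _ hk2).1
      rw [mul_sub, mul_one, sub_eq_zero] at h2
      exact h2
    have hyx : y + x = algebraMap ℂ C lam := by rw [hy, sub_add_cancel]
    have hleft : (lam⁻¹ • (1 + u * x)) * y = 1 := by
      have e1 : u * x * y = x := by rw [mul_assoc, hcomm, ← mul_assoc, huyx]
      rw [smul_mul_assoc, add_mul, one_mul, e1, hyx, Algebra.algebraMap_eq_smul_one,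
        smul_smul, inv_mul_cancel₀ hlam0, one_smul]
    have hright : y * (lam⁻¹ • (1 + x * u)) = 1 := by
      have e2 : y * (x * u) = x := by rw [← mul_assoc, ← hcomm, mul_assoc, hxyu]
      rw [mul_smul_comm, mul_add, mul_one, e2, hyx, Algebra.algebraMap_eq_smul_one,
        smul_smul, inv_mul_cancel₀ hlam0, one_smul]
    have heq2 : (lam⁻¹ • (1 + u * x)) = (lam⁻¹ • (1 + x * u)) :=
      left_inv_eq_right_inv hleft hright
    have : IsUnit y := ⟨⟨y, lam⁻¹ • (1 + u * x), by rw [heq2]; exact hright, hleft⟩, rfl⟩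
    exact (spectrum.mem_iff.mp hlam) this
  rw [← hnx]
  exact spectrum.norm_le_norm_of_mem hmem

/-- Auxiliary: the inner product with a fixed vector as a continuous linear map. -/
def innerCLM {A : Type*} [CStarAlgebra A] {X : Type*} [NormedAddCommGroup X]
    [NormedSpace ℂ X] [HilbertModule A X] (z : X) : X →L[ℂ] A :=
  LinearMap.mkContinuous
    { toFun := fun w => HilbertModule.inner z w
      map_add' := fun a b => HilbertModule.inner_add_right z a b
      map_smul' := fun c w => by
        simp only [RingHom.id_apply]
        rw [HilbertModule.inner_csmul_right] }
    ‖z‖ (fun w => HilbertModule.norm_inner_le z w)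

end AuxSpec

open HilbertModule in
/-- the restriction of the quotient map
`[·]_{I₂/(I₁∩I₂)} : X_{I₁∩I₂} → X_{I₂}` to `X_{I₁∩I₂}·(I₁/(I₁∩I₂))` is a bijection
onto `X_{I₂}·((I₁+I₂)/I₂)`. -/
theorem stmt4 {A C B₂ : Type*} [CStarAlgebra A] [CStarAlgebra C] [CStarAlgebra B₂]
    {X Z Y₂ : Type*} [NormedAddCommGroup X] [NormedSpace ℂ X] [HilbertModule A X]
    [NormedAddCommGroup Z] [NormedSpace ℂ Z] [HilbertModule C Z]
    [NormedAddCommGroup Y₂] [NormedSpace ℂ Y₂] [HilbertModule B₂ Y₂]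
    [CompleteSpace X] [CompleteSpace Z] [CompleteSpace Y₂]
    (I₁ I₂ : TwoSidedIdeal A)
    (hI₁ : IsClosed (I₁ : Set A)) (hI₂ : IsClosed (I₂ : Set A))
    (D : QuotientData A C (I₁ ⊓ I₂) X Z)   -- `Z` is `X_{I₁∩I₂}`
    (E : QuotientData A B₂ I₂ X Y₂)        -- `Y₂` is `X_{I₂}`
    (r : Z →ₗ[ℂ] Y₂) (hr : ∀ ξ : X, r (D.q ξ) = E.q ξ) :
    Set.BijOn r (idealSub Z (⇑D.π '' (I₁ : Set A)))
      (idealSub Y₂ (⇑E.π '' {a : A | ∃ b ∈ (I₁ : Set A), ∃ c ∈ (I₂ : Set A), a = b + c})) := by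
  classical
  -- the induced *-homomorphism `σ : A/(I₁∩I₂) → A/I₂`
  have hkey : ∀ a a' : A, D.π a = D.π a' → E.π a = E.π a' := by
    intro a a' h
    have h1 : a - a' ∈ I₁ ⊓ I₂ := (D.π_ker _).mp (by rw [map_sub, h, sub_self])
    have h3 : E.π (a - a') = 0 := (E.π_ker _).mpr ((TwoSidedIdeal.mem_inf A).mp h1).2
    rw [map_sub, sub_eq_zero] at h3
    exact h3
  choose s hs using D.π_surjective
  let σ : C →ₐ[ℂ] B₂ :=
    { toFun := fun c => E.π (s c)
      map_one' := by show E.π (s 1) = 1; rw [hkey (s 1) 1 (by rw [hs, map_one]), map_one]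
      map_mul' := fun c c' => by
        show E.π (s (c * c')) = E.π (s c) * E.π (s c')
        rw [hkey (s (c * c')) (s c * s c') (by rw [hs, map_mul, hs, hs]), map_mul]
      map_zero' := by show E.π (s 0) = 0; rw [hkey (s 0) 0 (by rw [hs, map_zero]), map_zero]
      map_add' := fun c c' => by
        show E.π (s (c + c')) = E.π (s c) + E.π (s c')
        rw [hkey (s (c + c')) (s c + s c') (by rw [hs, map_add, hs, hs]), map_add]
      commutes' := fun t => by
        show E.π (s (algebraMap ℂ C t)) = algebraMap ℂ B₂ t
        rw [hkey (s (algebraMap ℂ C t)) (algebraMap ℂ A t) (by rw [hs, AlgHomClass.commutes]),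
          AlgHomClass.commutes] }
  have hσ : ∀ a : A, σ (D.π a) = E.π a := fun a => hkey _ _ (hs _)
  have hσsurj : Function.Surjective σ := by
    intro b
    obtain ⟨a, rfl⟩ := E.π_surjective b
    exact ⟨D.π a, hσ a⟩
  have hsa : ∀ ξ : X, IsSelfAdjoint (HilbertModule.inner (A := A) ξ ξ) :=
    fun ξ => star_inner ξ ξ
  have hsaD : ∀ ξ : X, IsSelfAdjoint (D.π (HilbertModule.inner (A := A) ξ ξ)) :=
    fun ξ => show star _ = _ by rw [← map_star, (hsa ξ).star_eq]
  have hsaE : ∀ ξ : X, IsSelfAdjoint (E.π (HilbertModule.inner (A := A) ξ ξ)) :=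
    fun ξ => show star _ = _ by rw [← map_star, (hsa ξ).star_eq]
  -- `r` is contractive, hence continuous
  have hq_norm : ∀ ξ : X, ‖E.q ξ‖ ≤ ‖D.q ξ‖ := by
    intro ξ
    have h := auxSpec_norm_le σ (hsaD ξ) (by rw [hσ]; exact hsaE ξ)
    rw [hσ] at h
    have e1 : ‖E.q ξ‖ ^ 2 = ‖E.π (HilbertModule.inner (A := A) ξ ξ)‖ := by
      rw [← E.q_inner, ← norm_sq_inner]
    have e2 : ‖D.q ξ‖ ^ 2 = ‖D.π (HilbertModule.inner (A := A) ξ ξ)‖ := by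
      rw [← D.q_inner, ← norm_sq_inner]
    nlinarith [norm_nonneg (E.q ξ), norm_nonneg (D.q ξ)]
  have hr_le : ∀ z : Z, ‖r z‖ ≤ ‖z‖ := by
    intro z
    obtain ⟨ξ, rfl⟩ := D.q_surjective z
    rw [hr]
    exact hq_norm ξ
  have hrc : Continuous r := AddMonoidHomClass.continuous_of_bound r 1 (fun z => by rw [one_mul]; exact hr_le z)
  -- the annihilator submodule `Q`
  let Q : Submodule ℂ C :=
    { carrier := {c : C | ∀ b ∈ I₂, c * D.π b = 0 ∧ D.π b * c = 0}
      add_mem' := by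
        intro c c' hc hc' b hb
        refine ⟨?_, ?_⟩
        · rw [add_mul, (hc b hb).1, (hc' b hb).1, add_zero]
        · rw [mul_add, (hc b hb).2, (hc' b hb).2, add_zero]
      zero_mem' := by
        intro b hb
        exact ⟨zero_mul _, mul_zero _⟩
      smul_mem' := by
        intro t c hc b hb
        refine ⟨?_, ?_⟩
        · rw [smul_mul_assoc, (hc b hb).1, smul_zero]
        · rw [mul_smul_comm, (hc b hb).2, smul_zero] }
  have hQmem : ∀ c : C, c ∈ Q ↔ ∀ b ∈ I₂, c * D.π b = 0 ∧ D.π b * c = 0 := fun c => Iff.rfl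
  have hQc : IsClosed (Q : Set C) := by
    have h1 : ∀ b : A, IsClosed {c : C | c * D.π b = 0 ∧ D.π b * c = 0} := by
      intro b
      exact ((isClosed_singleton.preimage (continuous_mul_right (D.π b))).inter
        (isClosed_singleton.preimage (continuous_mul_left (D.π b))))
    have h2 : (Q : Set C) = ⋂ (b : A) (_ : b ∈ I₂),
        {c : C | c * D.π b = 0 ∧ D.π b * c = 0} := by
      ext c
      simp only [Set.mem_iInter, Set.mem_setOf_eq, SetLike.mem_coe]
      exact hQmem c
    rw [h2]
    exact isClosed_iInter fun b => isClosed_iInter fun _ => h1 b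
  -- generating sets
  have hid : idealSub Z (⇑D.π '' (I₁ : Set A)) =
      closure (↑(Submodule.span ℂ {x : Z | ∃ (ξ : Z) (a : C),
        a ∈ ⇑D.π '' (I₁ : Set A) ∧ x = HilbertModule.rsmul ξ a}) : Set Z) := rfl
  have hid₂ : idealSub Y₂
        (⇑E.π '' {a : A | ∃ b ∈ (I₁ : Set A), ∃ c ∈ (I₂ : Set A), a = b + c}) =
      closure (↑(Submodule.span ℂ {x : Y₂ | ∃ (ξ : Y₂) (a : B₂),
        a ∈ ⇑E.π '' {a : A | ∃ b ∈ (I₁ : Set A), ∃ c ∈ (I₂ : Set A), a = b + c} ∧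
          x = HilbertModule.rsmul ξ a}) : Set Y₂) := rfl
  -- inner products with elements of `X·I₁/X·(I₁∩I₂)` lie in `Q`
  have hinnerQ : ∀ z w : Z, w ∈ idealSub Z (⇑D.π '' (I₁ : Set A)) →
      HilbertModule.inner (A := C) z w ∈ Q := by
    intro z w hw
    rw [hid] at hw
    have hgen : (⇑(innerCLM (A := C) z)) '' ↑(Submodule.span ℂ {x : Z | ∃ (ξ : Z) (a : C),
        a ∈ ⇑D.π '' (I₁ : Set A) ∧ x = HilbertModule.rsmul ξ a}) ⊆ (Q : Set C) := by
      rintro c ⟨x, hx, rfl⟩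
      have hle : Submodule.map (innerCLM (A := C) z : Z →ₗ[ℂ] C) (Submodule.span ℂ
          {x : Z | ∃ (ξ : Z) (a : C), a ∈ ⇑D.π '' (I₁ : Set A) ∧
            x = HilbertModule.rsmul ξ a}) ≤ Q := by
        rw [Submodule.map_span]
        refine Submodule.span_le.mpr ?_
        rintro c' ⟨x', ⟨ζ, a, ⟨b₁, hb₁, rfl⟩, rfl⟩, rfl⟩
        have hval : (innerCLM (A := C) z) (HilbertModule.rsmul ζ (D.π b₁)) =
            D.π (s (HilbertModule.inner (A := C) z ζ) * b₁) := by
          show HilbertModule.inner (A := C) z (HilbertModule.rsmul ζ (D.π b₁)) = _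
          rw [HilbertModule.inner_rsmul_right, map_mul, hs]
        change (innerCLM (A := C) z) (HilbertModule.rsmul ζ (D.π b₁)) ∈ (Q : Set C)
        refine SetLike.mem_coe.mpr ((hQmem _).mpr fun b hb => ?_)
        refine ⟨?_, ?_⟩
        · rw [hval, ← map_mul]
          exact (D.π_ker _).mpr ((TwoSidedIdeal.mem_inf A).mpr
            ⟨I₁.mul_mem_right _ _ (I₁.mul_mem_left _ _ hb₁), I₂.mul_mem_left _ _ hb⟩)
        · rw [hval, ← map_mul]
          exact (D.π_ker _).mpr ((TwoSidedIdeal.mem_inf A).mpr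
            ⟨I₁.mul_mem_left _ _ (I₁.mul_mem_left _ _ hb₁), I₂.mul_mem_right _ _ hb⟩)
      exact SetLike.mem_coe.mpr (hle (Submodule.mem_map_of_mem hx))
    have h1 : HilbertModule.inner (A := C) z w ∈
        closure ((⇑(innerCLM (A := C) z)) '' ↑(Submodule.span ℂ {x : Z | ∃ (ξ : Z) (a : C),
          a ∈ ⇑D.π '' (I₁ : Set A) ∧ x = HilbertModule.rsmul ξ a})) :=
      image_closure_subset_closure_image (innerCLM (A := C) z).continuous ⟨w, hw, rfl⟩
    exact SetLike.mem_coe.mp ((hQc.closure_subset_iff.mpr hgen) h1)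
  -- `r` is isometric on `X·I₁/X·(I₁∩I₂)`
  have hiso : ∀ z ∈ idealSub Z (⇑D.π '' (I₁ : Set A)), ‖r z‖ = ‖z‖ := by
    intro z hz
    have hxQ : HilbertModule.inner (A := C) z z ∈ Q := hinnerQ z z hz
    obtain ⟨ξ, rfl⟩ := D.q_surjective z
    rw [D.q_inner] at hxQ
    have hann : ∀ k : C, σ k = 0 → D.π (HilbertModule.inner (A := A) ξ ξ) * k = 0 ∧
        k * D.π (HilbertModule.inner (A := A) ξ ξ) = 0 := by
      intro k hk
      obtain ⟨a, rfl⟩ := D.π_surjective k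
      have ha2 : a ∈ I₂ := (E.π_ker a).mp (by rw [← hσ a]; exact hk)
      exact (hQmem _).mp hxQ a ha2
    have hge := auxSpec_norm_ge σ hσsurj (hsaD ξ) hann
    have hle := auxSpec_norm_le σ (hsaD ξ) (by rw [hσ]; exact hsaE ξ)
    have heqn : ‖σ (D.π (HilbertModule.inner (A := A) ξ ξ))‖ =
        ‖D.π (HilbertModule.inner (A := A) ξ ξ)‖ := le_antisymm hle hge
    have e1 : ‖r (D.q ξ)‖ ^ 2 = ‖σ (D.π (HilbertModule.inner (A := A) ξ ξ))‖ := by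
      rw [hr, norm_sq_inner (A := B₂) (E.q ξ), E.q_inner, hσ]
    have e2 : ‖D.q ξ‖ ^ 2 = ‖D.π (HilbertModule.inner (A := A) ξ ξ)‖ := by
      rw [norm_sq_inner (A := C) (D.q ξ), D.q_inner]
    have h2 : ‖r (D.q ξ)‖ ^ 2 = ‖D.q ξ‖ ^ 2 := by rw [e1, e2, heqn]
    rw [← Real.sqrt_sq (norm_nonneg (r (D.q ξ))), ← Real.sqrt_sq (norm_nonneg (D.q ξ)), h2]
  refine ⟨?_, ?_, ?_⟩
  · -- MapsTo
    intro z hz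
    rw [hid] at hz
    rw [hid₂]
    have himg : ⇑r '' {x : Z | ∃ (ξ : Z) (a : C),
        a ∈ ⇑D.π '' (I₁ : Set A) ∧ x = HilbertModule.rsmul ξ a} ⊆
        {x : Y₂ | ∃ (ξ : Y₂) (a : B₂),
          a ∈ ⇑E.π '' {a : A | ∃ b ∈ (I₁ : Set A), ∃ c ∈ (I₂ : Set A), a = b + c} ∧
            x = HilbertModule.rsmul ξ a} := by
      rintro y ⟨x, ⟨ζ, a, ⟨b₁, hb₁, rfl⟩, rfl⟩, rfl⟩
      obtain ⟨η, rfl⟩ := D.q_surjective ζ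
      refine ⟨E.q η, E.π b₁, ⟨b₁, ⟨b₁, hb₁, 0, I₂.zero_mem, (add_zero b₁).symm⟩, rfl⟩, ?_⟩
      rw [← D.q_rsmul, hr, E.q_rsmul]
    have hsp : ⇑r '' ↑(Submodule.span ℂ {x : Z | ∃ (ξ : Z) (a : C),
        a ∈ ⇑D.π '' (I₁ : Set A) ∧ x = HilbertModule.rsmul ξ a}) ⊆
        ↑(Submodule.span ℂ {x : Y₂ | ∃ (ξ : Y₂) (a : B₂),
          a ∈ ⇑E.π '' {a : A | ∃ b ∈ (I₁ : Set A), ∃ c ∈ (I₂ : Set A), a = b + c} ∧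
            x = HilbertModule.rsmul ξ a}) := by
      rintro y ⟨x, hx, rfl⟩
      have hle : Submodule.map r (Submodule.span ℂ {x : Z | ∃ (ξ : Z) (a : C),
          a ∈ ⇑D.π '' (I₁ : Set A) ∧ x = HilbertModule.rsmul ξ a}) ≤
          Submodule.span ℂ {x : Y₂ | ∃ (ξ : Y₂) (a : B₂),
            a ∈ ⇑E.π '' {a : A | ∃ b ∈ (I₁ : Set A), ∃ c ∈ (I₂ : Set A), a = b + c} ∧
              x = HilbertModule.rsmul ξ a} := by
        rw [Submodule.map_span]
        exact Submodule.span_mono himg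
      exact SetLike.mem_coe.mpr (hle (Submodule.mem_map_of_mem hx))
    exact closure_mono hsp (image_closure_subset_closure_image hrc ⟨z, hz, rfl⟩)
  · -- InjOn
    intro z hz z' hz' hzz
    have hsub : z - z' ∈ idealSub Z (⇑D.π '' (I₁ : Set A)) := by
      rw [hid, ← Submodule.topologicalClosure_coe]
      rw [hid, ← Submodule.topologicalClosure_coe] at hz hz'
      exact SetLike.mem_coe.mpr (Submodule.sub_mem _ (SetLike.mem_coe.mp hz)
        (SetLike.mem_coe.mp hz'))
    have h0 : ‖z - z'‖ = 0 := by
      rw [← hiso _ hsub, map_sub, hzz, sub_self, norm_zero]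
    exact sub_eq_zero.mp (norm_eq_zero.mp h0)
  · -- SurjOn
    intro y hy
    have hNcl : IsClosed (↑((Submodule.span ℂ {x : Z | ∃ (ξ : Z) (a : C),
        a ∈ ⇑D.π '' (I₁ : Set A) ∧
          x = HilbertModule.rsmul ξ a}).topologicalClosure) : Set Z) :=
      Submodule.isClosed_topologicalClosure _
    -- the image of the closed submodule under `r` is closed, by the isometry
    have himcl : IsClosed (⇑r '' ↑((Submodule.span ℂ {x : Z | ∃ (ξ : Z) (a : C),
        a ∈ ⇑D.π '' (I₁ : Set A) ∧
          x = HilbertModule.rsmul ξ a}).topologicalClosure)) := by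
      refine isClosed_of_closure_subset fun y' hy' => ?_
      obtain ⟨u, hu, hulim⟩ := mem_closure_iff_seq_limit.mp hy'
      choose w hwN hw using hu
      have hmemid : ∀ n m : ℕ, w n - w m ∈ idealSub Z (⇑D.π '' (I₁ : Set A)) := by
        intro n m
        rw [hid, ← Submodule.topologicalClosure_coe]
        exact SetLike.mem_coe.mpr (Submodule.sub_mem _ (SetLike.mem_coe.mp (hwN n))
          (SetLike.mem_coe.mp (hwN m)))
      have hwd : ∀ m n : ℕ, dist (w m) (w n) = dist (u m) (u n) := by
        intro m n
        rw [dist_eq_norm, dist_eq_norm, ← hw m, ← hw n, ← map_sub]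
        exact (hiso _ (hmemid m n)).symm
      have hcw : CauchySeq w := by
        rw [Metric.cauchySeq_iff]
        have hcu : CauchySeq u := hulim.cauchySeq
        rw [Metric.cauchySeq_iff] at hcu
        intro ε hε
        obtain ⟨Nn, hNn⟩ := hcu ε hε
        exact ⟨Nn, fun m hm n hn => by rw [hwd]; exact hNn m hm n hn⟩
      obtain ⟨zl, hzl⟩ := cauchySeq_tendsto_of_complete hcw
      have hzlN : zl ∈ (↑((Submodule.span ℂ {x : Z | ∃ (ξ : Z) (a : C),
          a ∈ ⇑D.π '' (I₁ : Set A) ∧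
            x = HilbertModule.rsmul ξ a}).topologicalClosure) : Set Z) :=
        hNcl.mem_of_tendsto hzl (Filter.Eventually.of_forall hwN)
      have hry : Filter.Tendsto (fun n => r (w n)) Filter.atTop (nhds (r zl)) :=
        (hrc.tendsto zl).comp hzl
      have h' : Filter.Tendsto (fun n => r (w n)) Filter.atTop (nhds y') :=
        hulim.congr (fun n => (hw n).symm)
      exact ⟨zl, hzlN, (tendsto_nhds_unique h' hry).symm⟩
    -- generators of the target lie in the image
    have hgen₂ : {x : Y₂ | ∃ (ξ : Y₂) (a : B₂),
        a ∈ ⇑E.π '' {a : A | ∃ b ∈ (I₁ : Set A), ∃ c ∈ (I₂ : Set A), a = b + c} ∧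
          x = HilbertModule.rsmul ξ a} ⊆
        ⇑r '' ↑((Submodule.span ℂ {x : Z | ∃ (ξ : Z) (a : C),
          a ∈ ⇑D.π '' (I₁ : Set A) ∧
            x = HilbertModule.rsmul ξ a}).topologicalClosure) := by
      rintro y' ⟨υ, a', ⟨t, ⟨b, hb, c, hc, rfl⟩, rfl⟩, rfl⟩
      obtain ⟨η, rfl⟩ := E.q_surjective υ
      have hc0 : E.π c = 0 := (E.π_ker c).mpr hc
      refine ⟨HilbertModule.rsmul (D.q η) (D.π b), ?_, ?_⟩
      · rw [Submodule.topologicalClosure_coe]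
        exact subset_closure (Submodule.subset_span ⟨D.q η, D.π b, ⟨b, hb, rfl⟩, rfl⟩)
      · rw [← D.q_rsmul, hr, E.q_rsmul, map_add, hc0, add_zero]
    have hspan₂ : ↑(Submodule.span ℂ {x : Y₂ | ∃ (ξ : Y₂) (a : B₂),
        a ∈ ⇑E.π '' {a : A | ∃ b ∈ (I₁ : Set A), ∃ c ∈ (I₂ : Set A), a = b + c} ∧
          x = HilbertModule.rsmul ξ a}) ⊆
        ⇑r '' ↑((Submodule.span ℂ {x : Z | ∃ (ξ : Z) (a : C),
          a ∈ ⇑D.π '' (I₁ : Set A) ∧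
            x = HilbertModule.rsmul ξ a}).topologicalClosure) := by
      intro x hx
      have hle : Submodule.span ℂ {x : Y₂ | ∃ (ξ : Y₂) (a : B₂),
          a ∈ ⇑E.π '' {a : A | ∃ b ∈ (I₁ : Set A), ∃ c ∈ (I₂ : Set A), a = b + c} ∧
            x = HilbertModule.rsmul ξ a} ≤
          Submodule.map r ((Submodule.span ℂ {x : Z | ∃ (ξ : Z) (a : C),
            a ∈ ⇑D.π '' (I₁ : Set A) ∧
              x = HilbertModule.rsmul ξ a}).topologicalClosure) := by
        refine Submodule.span_le.mpr fun x' hx' => ?_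
        obtain ⟨z0, hz0, hz0'⟩ := hgen₂ hx'
        exact SetLike.mem_coe.mpr (Submodule.mem_map.mpr ⟨z0, SetLike.mem_coe.mp hz0, hz0'⟩)
      have h5 := hle (SetLike.mem_coe.mp hx)
      rw [Submodule.mem_map] at h5
      obtain ⟨z0, hz0, hz0'⟩ := h5
      exact ⟨z0, SetLike.mem_coe.mpr hz0, hz0'⟩
    rw [hid₂] at hy
    have h6 := himcl.closure_subset (closure_mono hspan₂ hy)
    obtain ⟨z0, hz0, rfl⟩ := h6
    refine ⟨z0, ?_, rfl⟩
    rw [hid, ← Submodule.topologicalClosure_coe]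
    exact hz0
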